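/- If ρ_1 = 1 or ρ_1 = -1, then the planar system (5.1) has no nonconstant polynomial first integral: every F ∈ ℂ[x_1,x_2] with f_1 ∂F/∂x_1 + f_2 ∂F/∂x_2 = 0 is constant. -/

import Mathlib

open MvPolynomial

noncomputable section PlanarProofAux

noncomputable def dh : MvPolynomial (Fin 2) ℂ →ₐ[ℂ] Polynomial ℂ :=
  MvPolynomial.aeval ![1, Polynomial.X]

lemma dh_pderiv (F : MvPolynomial (Fin 2) ℂ) :
    Polynomial.derivative (dh F) = dh (pderiv 1 F) := by
  induction F using MvPolynomial.induction_on with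
  | C a => simp [dh, pderiv_C]
  | add p q hp hq => simp [map_add, hp, hq]
  | mul_X p i hp =>
    fin_cases i <;> simp only [Fin.zero_eta, Fin.mk_one]
    · simp only [map_mul, pderiv_mul, map_add]
      have h0 : dh (X 0) = 1 := by simp [dh]
      have h0' : pderiv (R := ℂ) (σ := Fin 2) 1 (X 0) = 0 := by simp
      rw [h0, h0', Polynomial.derivative_mul, hp]
      simp
    · have h1 : dh (X 1) = Polynomial.X := by simp [dh]
      simp only [map_mul, pderiv_mul, map_add, h1]
      rw [Polynomial.derivative_mul, hp]
      have h1' : pderiv (R := ℂ) (σ := Fin 2) 1 (X 1) = 1 := by simp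
      rw [h1']
      simp


lemma eval_aeval_poly (g : Fin 2 → Polynomial ℂ) (r : ℂ) (F : MvPolynomial (Fin 2) ℂ) :
    Polynomial.eval r (MvPolynomial.aeval g F) = eval (fun i => (g i).eval r) F := by
  induction F using MvPolynomial.induction_on with
  | C a => simp
  | add p q hp hq => simp [map_add, hp, hq]
  | mul_X p i hp => simp [map_mul, hp]

lemma dh_eval (r : ℂ) (F : MvPolynomial (Fin 2) ℂ) :
    Polynomial.eval r (dh F) = eval ![1, r] F := by
  rw [dh, eval_aeval_poly]
  have : (fun i => Polynomial.eval r (![1, Polynomial.X] i)) = ![(1:ℂ), r] := by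
    funext i; fin_cases i <;> simp
  rw [this]


lemma deg2 (d : Fin 2 →₀ ℕ) : d.degree = d 0 + d 1 := by
  rw [Finsupp.degree_apply]
  rw [Finset.sum_subset (Finset.subset_univ d.support)
    (fun i _ hi => Finsupp.notMem_support_iff.mp hi)]
  exact Fin.sum_univ_two d

lemma homog_deg2 {m : ℕ} {F : MvPolynomial (Fin 2) ℂ} (hF : F.IsHomogeneous m)
    {d : Fin 2 →₀ ℕ} (hd : d ∈ F.support) : d 0 + d 1 = m := by
  have := hF (mem_support_iff.mp hd)
  change (Finsupp.weight (fun _ => 1)) d = m at this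
  rw [← Finsupp.degree_eq_weight_one, deg2] at this
  exact this

lemma X_mul_pderiv_monomial (d : Fin 2 →₀ ℕ) (c : ℂ) (i : Fin 2) :
    X i * pderiv i (monomial d c) = monomial d (c * d i) := by
  rw [pderiv_monomial]
  rcases Nat.eq_zero_or_pos (d i) with h | h
  · simp [h]
  · have hd : Finsupp.single i 1 + (d - Finsupp.single i 1) = d := by
      ext j
      rcases eq_or_ne j i with rfl | hne
      · simp [Finsupp.single_apply]
        omega
      · simp [Finsupp.single_apply, hne.symm, Ne.symm hne]
    conv_rhs => rw [← hd, monomial_single_add]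
    rw [pow_one, hd]

lemma euler {m : ℕ} {F : MvPolynomial (Fin 2) ℂ} (hF : F.IsHomogeneous m) :
    X 0 * pderiv 0 F + X 1 * pderiv 1 F = C (m : ℂ) * F := by
  conv_lhs => rw [F.as_sum]
  conv_rhs => rw [F.as_sum]
  rw [map_sum (pderiv 0), map_sum (pderiv 1), Finset.mul_sum, Finset.mul_sum, Finset.mul_sum,
    ← Finset.sum_add_distrib]
  refine Finset.sum_congr rfl fun d hd => ?_
  rw [X_mul_pderiv_monomial, X_mul_pderiv_monomial, ← map_add, C_mul_monomial]
  congr 1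
  have hdeg := homog_deg2 hF hd
  push_cast [← hdeg]
  ring

lemma pderiv_homog {m : ℕ} {F : MvPolynomial (Fin 2) ℂ} (hF : F.IsHomogeneous m) (i : Fin 2) :
    (pderiv i F).IsHomogeneous (m - 1) := by
  conv => enter [1]; rw [F.as_sum]
  rw [map_sum (pderiv i)]
  apply MvPolynomial.IsHomogeneous.sum
  intro d hd
  have hdeg := homog_deg2 hF hd
  rw [pderiv_monomial]
  rcases Nat.eq_zero_or_pos (d i) with h | h
  · simp only [h, Nat.cast_zero, mul_zero]
    rw [map_zero]
    exact isHomogeneous_zero _ _ _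
  · apply isHomogeneous_monomial
    rw [deg2]
    simp only [Finsupp.tsub_apply, Finsupp.single_apply]
    have h0 : i = 0 ∨ i = 1 := by omega
    rcases h0 with rfl | rfl <;> simp <;> omega


lemma dh_monomial (d : Fin 2 →₀ ℕ) (c : ℂ) :
    dh (monomial d c) = Polynomial.C c * Polynomial.X ^ (d 1) := by
  rw [dh, aeval_monomial]
  rw [Finsupp.prod_fintype _ _ (fun i => pow_zero _)]
  rw [Fin.prod_univ_two]
  simp [Algebra.algebraMap_self_apply]

lemma dh_natDegree_le {m : ℕ} {F : MvPolynomial (Fin 2) ℂ} (hF : F.IsHomogeneous m) :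
    (dh F).natDegree ≤ m := by
  conv => enter [1,1]; rw [F.as_sum]
  rw [map_sum]
  apply Polynomial.natDegree_sum_le_of_forall_le
  intro d hd
  rw [dh_monomial]
  apply le_trans (Polynomial.natDegree_mul_le)
  have := homog_deg2 hF hd
  simp [Polynomial.natDegree_X_pow]
  omega

lemma eval_smul_homog {m : ℕ} {F : MvPolynomial (Fin 2) ℂ} (hF : F.IsHomogeneous m)
    (s : ℂ) (x : Fin 2 → ℂ) : eval (s • x) F = s ^ m * eval x F := by
  conv_lhs => rw [F.as_sum]
  conv_rhs => rw [F.as_sum]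
  rw [map_sum, map_sum, Finset.mul_sum]
  refine Finset.sum_congr rfl fun d hd => ?_
  rw [eval_monomial, eval_monomial]
  have hprod : ∀ y : Fin 2 → ℂ, (d.prod fun i e => y i ^ e) = y 0 ^ d 0 * y 1 ^ d 1 := by
    intro y
    rw [Finsupp.prod_fintype _ _ (fun i => pow_zero _), Fin.prod_univ_two]
  rw [hprod, hprod]
  have := homog_deg2 hF hd
  simp only [Pi.smul_apply, smul_eq_mul]
  rw [mul_pow, mul_pow, ← this]
  ring


lemma dehom_eval {m : ℕ} {F : MvPolynomial (Fin 2) ℂ} (hF : F.IsHomogeneous m)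
    (x : Fin 2 → ℂ) :
    eval x F = ∑ j ∈ Finset.range (m+1), (dh F).coeff j * (x 1) ^ j * (x 0) ^ (m-j) := by
  set P := dh F with hP
  have hdeg : P.natDegree < m + 1 := Nat.lt_succ_of_le (dh_natDegree_le hF)
  set t := x 1 with ht
  set Q₁ : Polynomial ℂ := MvPolynomial.aeval ![Polynomial.X, Polynomial.C t] F with hQ₁def
  have hQ₁ : ∀ s : ℂ, Q₁.eval s = eval ![s, t] F := by
    intro s
    rw [hQ₁def, eval_aeval_poly]
    have : (fun i => Polynomial.eval s (![Polynomial.X, Polynomial.C t] i)) = ![s, t] := by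
      funext i; fin_cases i <;> simp
    rw [this]
  set Q₂ : Polynomial ℂ := ∑ j ∈ Finset.range (m+1),
      Polynomial.C (P.coeff j * t ^ j) * Polynomial.X ^ (m - j) with hQ₂def
  have hQ₂ : ∀ s : ℂ, Q₂.eval s = ∑ j ∈ Finset.range (m+1), P.coeff j * t ^ j * s ^ (m-j) := by
    intro s
    rw [hQ₂def, Polynomial.eval_finset_sum]
    simp
  have hagree : ∀ s : ℂ, s ≠ 0 → Q₁.eval s = Q₂.eval s := by
    intro s hs
    rw [hQ₁, hQ₂]
    have hx : ![s, t] = s • ![(1:ℂ), t / s] := by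
      funext i; fin_cases i <;> simp [hs, mul_div_cancel₀]
    rw [hx, eval_smul_homog hF, ← dh_eval, ← hP,
      Polynomial.eval_eq_sum_range' hdeg, Finset.mul_sum]
    refine Finset.sum_congr rfl fun j hj => ?_
    have hjm : j ≤ m := Nat.lt_succ_iff.mp (Finset.mem_range.mp hj)
    have hpow : s ^ (m - j) * s ^ j = s ^ m := by
      rw [← pow_add]; congr 1; omega
    field_simp
    rw [← hpow]
    rw [div_pow, div_eq_mul_inv]
    linear_combination (s ^ (m - j) * P.coeff j * t ^ j) * mul_inv_cancel₀ (pow_ne_zero j hs)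
  have hQeq : Q₁ = Q₂ := by
    have hsub : Q₁ - Q₂ = 0 := by
      apply Polynomial.eq_zero_of_infinite_isRoot
      apply Set.Infinite.mono (s := {s : ℂ | s ≠ 0})
      · intro s hs
        simp only [Set.mem_setOf_eq, Polynomial.IsRoot, Polynomial.eval_sub]
        rw [hagree s hs]; ring
      · exact Set.Finite.infinite_compl (Set.finite_singleton 0)
    linear_combination (norm := ring_nf) hsub
  have hxx : x = ![x 0, x 1] := by funext i; fin_cases i <;> rfl
  rw [hxx, ← ht, ← hQ₁ (x 0), hQeq, hQ₂]
  simp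


lemma key (A₁ B₁ D₂ A₂ B₂ D₁ p q p' q' ρ : ℂ)
    (hp : p ≠ 0)
    (hb1 : A₁*p^2 + B₁*p*q + D₂*q^2 = -p)
    (hb2 : A₂*q^2 + B₂*p*q + D₁*p^2 = -q)
    (hb1' : A₁*p'^2 + B₁*p'*q' + D₂*q'^2 = -p')
    (hb2' : A₂*q'^2 + B₂*p'*q' + D₁*p'^2 = -q')
    (hdet : p*q' - q*p' ≠ 0)
    (hρval : ρ = 2*A₁*p + B₁*q + 2*A₂*q + B₂*p + 3)
    (hρ : ρ = 1 ∨ ρ = -1)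
    (m : ℕ) (hm : 1 ≤ m)
    (F : MvPolynomial (Fin 2) ℂ) (hF : F.IsHomogeneous m)
    (hPDE : (C A₁*X 0^2 + C B₁*X 0*X 1 + C D₂*X 1^2) * pderiv 0 F
          + (C A₂*X 1^2 + C B₂*X 0*X 1 + C D₁*X 0^2) * pderiv 1 F = 0) :
    F = 0 := by
  have hmC : (m : ℂ) ≠ 0 := Nat.cast_ne_zero.mpr (by omega)
  obtain ⟨u₀, hpu⟩ : ∃ u : ℂ, p * u = q := ⟨q / p, by field_simp⟩
  set φp : Polynomial ℂ :=
    Polynomial.C A₁ + Polynomial.C B₁ * Polynomial.X + Polynomial.C D₂ * Polynomial.X^2 with hφp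
  set τp : Polynomial ℂ :=
    Polynomial.C D₁ + Polynomial.C B₂ * Polynomial.X + Polynomial.C A₂ * Polynomial.X^2 with hτp
  set ψp : Polynomial ℂ := Polynomial.X * φp - τp with hψp
  set P : Polynomial ℂ := dh F with hP
  -- dehomogenized coefficients
  have h1 : dh (C A₁*X 0^2 + C B₁*X 0*X 1 + C D₂*X 1^2) = φp := by
    simp [dh, Polynomial.algebraMap_eq, hφp]
  have h1' : dh (C A₂*X 1^2 + C B₂*X 0*X 1 + C D₁*X 0^2) = τp := by
    simp [dh, Polynomial.algebraMap_eq, hτp]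
    ring
  have hde : dh (pderiv 1 F) = Polynomial.derivative P := (dh_pderiv F).symm
  have he0 : dh (pderiv 0 F)
      = Polynomial.C (m:ℂ) * P - Polynomial.X * Polynomial.derivative P := by
    have h := congrArg dh (euler hF)
    simp only [map_add, map_mul] at h
    have hX0 : dh (X 0) = 1 := by simp [dh]
    have hX1 : dh (X 1) = Polynomial.X := by simp [dh]
    have hC : dh (C (m:ℂ)) = Polynomial.C (m:ℂ) := by simp [dh, Polynomial.algebraMap_eq]
    rw [hX0, hX1, hC, hde] at h
    linear_combination h
  have hODE : ψp * Polynomial.derivative P = Polynomial.C (m:ℂ) * (φp * P) := by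
    have h := congrArg dh hPDE
    rw [map_add, map_mul, map_mul, map_zero, h1, h1', hde, he0] at h
    rw [hψp]
    linear_combination -h
  -- scalar values
  have hφu : p * φp.eval u₀ = -1 := by
    have h3 : p^3 * φp.eval u₀ = -p^2 := by
      rw [hφp]
      simp only [Polynomial.eval_add, Polynomial.eval_mul, Polynomial.eval_C, Polynomial.eval_X,
        Polynomial.eval_pow]
      linear_combination p*hb1 + (B₁*p^2 + D₂*p*(p*u₀+q))*hpu
    have h4 : p^2 * (p * φp.eval u₀) = p^2 * (-1) := by linear_combination h3
    exact mul_left_cancel₀ (pow_ne_zero 2 hp) h4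
  have hψu : ψp.eval u₀ = 0 := by
    have h3 : p^3 * ψp.eval u₀ = 0 := by
      rw [hψp, hφp, hτp]
      simp only [Polynomial.eval_sub, Polynomial.eval_add, Polynomial.eval_mul, Polynomial.eval_C,
        Polynomial.eval_X, Polynomial.eval_pow]
      linear_combination q*hb1 - p*hb2 +
        (A₁*p^2 + B₁*p*(p*u₀+q) + D₂*(p^2*u₀^2+p*u₀*q+q^2) - B₂*p^2 - A₂*p*(p*u₀+q)) * hpu
    have h4 : p^3 * ψp.eval u₀ = p^3 * 0 := by linear_combination h3
    exact mul_left_cancel₀ (pow_ne_zero 3 hp) h4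
  have hψ'u : p * (Polynomial.derivative ψp).eval u₀ = -ρ := by
    have h3 : p^3 * (Polynomial.derivative ψp).eval u₀ = -ρ * p^2 := by
      rw [hρval, hψp, hφp, hτp]
      simp only [Polynomial.derivative_sub, Polynomial.derivative_add, Polynomial.derivative_mul,
        Polynomial.derivative_C, Polynomial.derivative_X, Polynomial.derivative_pow,
        Polynomial.eval_sub, Polynomial.eval_add, Polynomial.eval_mul, Polynomial.eval_C,
        Polynomial.eval_X, Polynomial.eval_pow, Polynomial.eval_one, Polynomial.eval_zero,
        Polynomial.eval_natCast]
      push_cast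
      linear_combination 3*p*hb1 + (2*B₁*p^2 + 3*D₂*p*(p*u₀+q) - 2*A₂*p^2)*hpu
    have h4 : p^2 * (p * (Polynomial.derivative ψp).eval u₀) = p^2 * (-ρ) := by
      linear_combination h3
    exact mul_left_cancel₀ (pow_ne_zero 2 hp) h4
  rcases eq_or_ne P 0 with hP0 | hP0
  · apply MvPolynomial.funext
    intro x
    rw [dehom_eval hF x, ← hP, hP0]
    simp
  · exfalso
    have hφu0 : φp.eval u₀ ≠ 0 := by
      intro h
      rw [h, mul_zero] at hφu
      norm_num at hφu
    have hProot : P.eval u₀ = 0 := by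
      have h := congrArg (Polynomial.eval u₀) hODE
      simp only [Polynomial.eval_mul, Polynomial.eval_C, hψu, zero_mul] at h
      rcases mul_eq_zero.mp h.symm with h' | h'
      · exact absurd h' hmC
      · rcases mul_eq_zero.mp h' with h'' | h''
        · exact absurd h'' hφu0
        · exact h''
    have hk1 : 0 < P.rootMultiplicity u₀ := (Polynomial.rootMultiplicity_pos hP0).mpr hProot
    set Q : Polynomial ℂ := P /ₘ (Polynomial.X - Polynomial.C u₀) ^ P.rootMultiplicity u₀
      with hQdef
    have hPQ : (Polynomial.X - Polynomial.C u₀) ^ P.rootMultiplicity u₀ * Q = P :=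
      Polynomial.pow_mul_divByMonic_rootMultiplicity_eq P u₀
    have hQu : Q.eval u₀ ≠ 0 :=
      Polynomial.eval_divByMonic_pow_rootMultiplicity_ne_zero u₀ hP0
    obtain ⟨χ, hχ⟩ : (Polynomial.X - Polynomial.C u₀) ∣ ψp := Polynomial.dvd_iff_isRoot.mpr hψu
    have hχu : χ.eval u₀ = (Polynomial.derivative ψp).eval u₀ := by
      rw [hχ, Polynomial.derivative_mul, Polynomial.derivative_X_sub_C]
      simp
    obtain ⟨e, hke⟩ : ∃ e, P.rootMultiplicity u₀ = e + 1 :=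
      ⟨P.rootMultiplicity u₀ - 1, by omega⟩
    rw [hke] at hPQ
    have hcan : (Polynomial.X - Polynomial.C u₀)^(e+1) *
        (χ * (Polynomial.C ((e:ℂ)+1) * Q
          + (Polynomial.X - Polynomial.C u₀) * Polynomial.derivative Q))
        = (Polynomial.X - Polynomial.C u₀)^(e+1) * (Polynomial.C (m:ℂ) * (φp * Q)) := by
      have h := hODE
      rw [← hPQ, hχ, Polynomial.derivative_mul, Polynomial.derivative_pow,
        Polynomial.derivative_X_sub_C] at h
      simp only [Nat.add_sub_cancel, mul_one] at h
      push_cast at h ⊢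
      linear_combination h
    have hcan' := mul_left_cancel₀
      (pow_ne_zero (e+1) (Polynomial.X_sub_C_ne_zero u₀)) hcan
    have hscal := congrArg (Polynomial.eval u₀) hcan'
    simp only [Polynomial.eval_mul, Polynomial.eval_add, Polynomial.eval_sub,
      Polynomial.eval_C, Polynomial.eval_X, sub_self, zero_mul, add_zero, hχu] at hscal
    have hkρ : ((e:ℂ)+1) * ρ = m := by
      have h6 : (((e:ℂ)+1) * ρ) * Q.eval u₀ = (m:ℂ) * Q.eval u₀ := by
        linear_combination (-p) * hscal + ((e:ℂ)+1) * Q.eval u₀ * hψ'u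
          - (m:ℂ) * Q.eval u₀ * hφu
      exact mul_right_cancel₀ hQu h6
    rcases hρ with h1ρ | h1ρ
    · -- ρ = 1 : multiplicity = m, P = γ (X - u₀)^m
      rw [h1ρ, mul_one] at hkρ
      have hkm : e + 1 = m := by exact_mod_cast hkρ
      have hdP : P.natDegree ≤ m := by rw [hP]; exact dh_natDegree_le hF
      have hQne : Q ≠ 0 := by
        intro h
        rw [h, mul_zero] at hPQ
        exact hP0 hPQ.symm
      have hdeg : P.natDegree = (e+1) + Q.natDegree := by
        rw [← hPQ, Polynomial.natDegree_mul (pow_ne_zero _ (Polynomial.X_sub_C_ne_zero u₀)) hQne,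
          Polynomial.natDegree_pow, Polynomial.natDegree_X_sub_C, mul_one]
      obtain ⟨γ, hγ⟩ := Polynomial.natDegree_eq_zero.mp (show Q.natDegree = 0 by omega)
      have hγ0 : γ ≠ 0 := by
        intro h
        rw [← hγ, h] at hQu
        simp at hQu
      -- F vanishes at the second balance point
      have hEv := congrArg (eval ![p', q']) (euler hF)
      have hPt := congrArg (eval ![p', q']) hPDE
      simp only [map_add, map_mul, map_pow, eval_X, eval_C, Matrix.cons_val_zero,
        Matrix.cons_val_one, Matrix.head_cons, map_zero] at hEv hPt
      have hFc2 : eval ![p', q'] F = 0 := by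
        have h7 : (m:ℂ) * eval ![p', q'] F = 0 := by
          linear_combination (-1) * hEv - hPt + (eval ![p', q'] (pderiv 0 F)) * hb1'
            + (eval ![p', q'] (pderiv 1 F)) * hb2'
        rcases mul_eq_zero.mp h7 with h' | h'
        · exact absurd h' hmC
        · exact h'
      have hsum := dehom_eval hF ![p', q']
      rw [hFc2, ← hP] at hsum
      simp only [Matrix.cons_val_zero, Matrix.cons_val_one, Matrix.head_cons] at hsum
      have hcoeff : ∀ j, P.coeff j = γ * ((-u₀) ^ (m - j) * (m.choose j : ℂ)) := by
        intro j
        rw [← hPQ, ← hγ, hkm, Polynomial.coeff_mul_C, sub_eq_add_neg, ← Polynomial.C_neg,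
          Polynomial.coeff_X_add_C_pow]
        ring
      have hS : ∑ j ∈ Finset.range (m+1), P.coeff j * q' ^ j * p' ^ (m-j)
          = γ * (q' + (-u₀) * p') ^ m := by
        rw [add_pow, Finset.mul_sum]
        refine Finset.sum_congr rfl fun j hj => ?_
        rw [hcoeff j, mul_pow]
        ring
      rw [hS] at hsum
      have hz : q' + (-u₀) * p' = 0 := by
        rcases mul_eq_zero.mp hsum.symm with h' | h'
        · exact absurd h' hγ0
        · exact pow_eq_zero_iff (by omega) |>.mp h'
      apply hdet
      linear_combination p * hz + p' * hpu
    · -- ρ = -1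
      rw [h1ρ] at hkρ
      have hcast : ((m + e + 1 : ℕ) : ℂ) = 0 := by push_cast; linear_combination -hkρ
      have := Nat.cast_eq_zero.mp hcast
      omega

end PlanarProofAux

/-- If `ρ₁ = 1` or `ρ₁ = -1`, the planar quadratic system (5.1) has no
nonconstant polynomial first integral. -/

theorem planar_no_first_integral_of_rho_pm_one
    (a₁ b₁ d₂ a₂ b₂ d₁ : ℂ)
    (f : Fin 2 → MvPolynomial (Fin 2) ℂ)
    (hf0 : f 0 = C a₁ * X 0 ^ 2 + C b₁ * X 0 * X 1 + C d₂ * X 1 ^ 2)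
    (hf1 : f 1 = C a₂ * X 1 ^ 2 + C b₂ * X 0 * X 1 + C d₁ * X 0 ^ 2)
    (c₁ c₂ : Fin 2 → ℂ)
    (hc₁ : ∀ i, eval c₁ (f i) + c₁ i = 0)
    (hc₂ : ∀ i, eval c₂ (f i) + c₂ i = 0)
    (hind : LinearIndependent ℂ ![c₁, c₂])
    (ρ₁ ρ₂ : ℂ)
    (hK₁ : (Matrix.of fun i j : Fin 2 => eval c₁ (pderiv j (f i)) + if i = j then (1 : ℂ) else 0).charpoly
        = (Polynomial.X + Polynomial.C 1) * (Polynomial.X - Polynomial.C ρ₁))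
    (hK₂ : (Matrix.of fun i j : Fin 2 => eval c₂ (pderiv j (f i)) + if i = j then (1 : ℂ) else 0).charpoly
        = (Polynomial.X + Polynomial.C 1) * (Polynomial.X - Polynomial.C ρ₂))
    (hρ : ρ₁ = 1 ∨ ρ₁ = -1) :
    ∀ F : MvPolynomial (Fin 2) ℂ,
      f 0 * pderiv 0 F + f 1 * pderiv 1 F = 0 → ∃ k : ℂ, F = C k := by
  intro F hFint
  -- balance equations in scalar form
  have hb1 : a₁ * (c₁ 0)^2 + b₁ * (c₁ 0) * (c₁ 1) + d₂ * (c₁ 1)^2 = -(c₁ 0) := by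
    have h := hc₁ 0
    rw [hf0] at h
    simp only [map_add, map_mul, map_pow, eval_C, eval_X] at h
    linear_combination h
  have hb2 : a₂ * (c₁ 1)^2 + b₂ * (c₁ 0) * (c₁ 1) + d₁ * (c₁ 0)^2 = -(c₁ 1) := by
    have h := hc₁ 1
    rw [hf1] at h
    simp only [map_add, map_mul, map_pow, eval_C, eval_X] at h
    linear_combination h
  have hb1' : a₁ * (c₂ 0)^2 + b₁ * (c₂ 0) * (c₂ 1) + d₂ * (c₂ 1)^2 = -(c₂ 0) := by
    have h := hc₂ 0
    rw [hf0] at h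
    simp only [map_add, map_mul, map_pow, eval_C, eval_X] at h
    linear_combination h
  have hb2' : a₂ * (c₂ 1)^2 + b₂ * (c₂ 0) * (c₂ 1) + d₁ * (c₂ 0)^2 = -(c₂ 1) := by
    have h := hc₂ 1
    rw [hf1] at h
    simp only [map_add, map_mul, map_pow, eval_C, eval_X] at h
    linear_combination h
  -- value of ρ₁ from the characteristic polynomial
  have hρval : ρ₁ = 2*a₁*(c₁ 0) + b₁*(c₁ 1) + 2*a₂*(c₁ 1) + b₂*(c₁ 0) + 3 := by
    set K : Matrix (Fin 2) (Fin 2) ℂ :=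
      Matrix.of fun i j : Fin 2 => eval c₁ (pderiv j (f i)) + if i = j then (1 : ℂ) else 0 with hK
    have htr := Matrix.trace_eq_neg_charpoly_coeff K
    rw [hK₁] at htr
    have hcoeff : ((Polynomial.X + Polynomial.C 1) * (Polynomial.X - Polynomial.C ρ₁)).coeff
        (Fintype.card (Fin 2) - 1) = 1 - ρ₁ := by
      simp [mul_sub, add_mul, Polynomial.coeff_sub, Polynomial.coeff_add, Polynomial.X_mul_C,
        Polynomial.coeff_C_mul, Polynomial.coeff_X, Polynomial.coeff_C]
    rw [hcoeff] at htr
    have htr2 : K.trace = K 0 0 + K 1 1 := Matrix.trace_fin_two K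
    have e00 : eval c₁ (pderiv 0 (f 0)) = 2*a₁*(c₁ 0) + b₁*(c₁ 1) := by
      rw [hf0]
      simp only [map_add, map_mul, map_pow, pderiv_mul, pderiv_pow, pderiv_C, pderiv_X_self,
        pderiv_X_of_ne (show (1:Fin 2) ≠ 0 by decide), map_add, map_mul, eval_C, eval_X]
      simp
      ring
    have e11 : eval c₁ (pderiv 1 (f 1)) = 2*a₂*(c₁ 1) + b₂*(c₁ 0) := by
      rw [hf1]
      simp only [map_add, map_mul, map_pow, pderiv_mul, pderiv_pow, pderiv_C, pderiv_X_self,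
        pderiv_X_of_ne (show (0:Fin 2) ≠ 1 by decide), map_add, map_mul, eval_C, eval_X]
      simp
      ring
    have hK00 : K 0 0 = eval c₁ (pderiv 0 (f 0)) + 1 := by simp [hK]
    have hK11 : K 1 1 = eval c₁ (pderiv 1 (f 1)) + 1 := by simp [hK]
    rw [htr2, hK00, hK11, e00, e11] at htr
    linear_combination -htr
  -- independence consequences
  have hpair := LinearIndependent.pair_iff.mp hind
  have hc1nz : ¬(c₁ 0 = 0 ∧ c₁ 1 = 0) := by
    rintro ⟨h0, h1⟩
    have h := (hpair 1 0 (by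
      funext i
      fin_cases i <;> simp [h0, h1])).1
    norm_num at h
  have hdet : c₁ 0 * c₂ 1 - c₁ 1 * c₂ 0 ≠ 0 := by
    intro h
    have h1 := hpair (c₂ 1) (-(c₁ 1)) (by
      funext i
      fin_cases i
      · simp only [Pi.add_apply, Pi.smul_apply, smul_eq_mul, Pi.zero_apply, Fin.zero_eta]
        linear_combination h
      · simp only [Pi.add_apply, Pi.smul_apply, smul_eq_mul, Pi.zero_apply, Fin.mk_one]
        ring)
    have h2 := hpair (c₂ 0) (-(c₁ 0)) (by
      funext i
      fin_cases i
      · simp only [Pi.add_apply, Pi.smul_apply, smul_eq_mul, Pi.zero_apply, Fin.zero_eta]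
        ring
      · simp only [Pi.add_apply, Pi.smul_apply, smul_eq_mul, Pi.zero_apply, Fin.mk_one]
        linear_combination -h)
    exact hc1nz ⟨by simpa using h2.2, by simpa using h1.2⟩
  -- homogeneity of the vector field
  have hf0h : (f 0).IsHomogeneous 2 := by
    rw [hf0]
    exact ((isHomogeneous_C_mul_X_pow a₁ 0 2).add
      ((isHomogeneous_C_mul_X b₁ 0).mul (isHomogeneous_X ℂ 1))).add
      (isHomogeneous_C_mul_X_pow d₂ 1 2)
  have hf1h : (f 1).IsHomogeneous 2 := by
    rw [hf1]
    exact ((isHomogeneous_C_mul_X_pow a₂ 1 2).add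
      ((isHomogeneous_C_mul_X b₂ 0).mul (isHomogeneous_X ℂ 1))).add
      (isHomogeneous_C_mul_X_pow d₁ 0 2)
  -- each homogeneous component is a first integral
  have hcompPDE : ∀ n, f 0 * pderiv 0 (homogeneousComponent n F)
      + f 1 * pderiv 1 (homogeneousComponent n F) = 0 := by
    intro n
    by_cases hn : n ≤ F.totalDegree
    swap
    · rw [homogeneousComponent_eq_zero n F (by omega)]
      simp
    · have hexp : (0 : MvPolynomial (Fin 2) ℂ) = ∑ i ∈ Finset.range (F.totalDegree + 1),
          (f 0 * pderiv 0 (homogeneousComponent i F)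
            + f 1 * pderiv 1 (homogeneousComponent i F)) := by
        rw [← hFint]
        conv_lhs => rw [← sum_homogeneousComponent F]
        rw [map_sum (pderiv 0), map_sum (pderiv 1), Finset.mul_sum, Finset.mul_sum,
          ← Finset.sum_add_distrib]
      have hcomp := congrArg (homogeneousComponent (n+1)) hexp
      rw [map_zero, map_sum] at hcomp
      have hterm : ∀ i ∈ Finset.range (F.totalDegree + 1),
          homogeneousComponent (n+1) (f 0 * pderiv 0 (homogeneousComponent i F)
            + f 1 * pderiv 1 (homogeneousComponent i F))
          = if i = n then (f 0 * pderiv 0 (homogeneousComponent n F)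
            + f 1 * pderiv 1 (homogeneousComponent n F)) else 0 := by
        intro i _
        rcases Nat.eq_zero_or_pos i with rfl | hi
        · rw [homogeneousComponent_zero]
          simp only [pderiv_C, mul_zero, add_zero, map_zero]
          rcases eq_or_ne (0:ℕ) n with rfl | hne
          · rw [if_pos rfl, homogeneousComponent_zero]
            simp [pderiv_C]
          · rw [if_neg hne]
        · have hhom : (f 0 * pderiv 0 (homogeneousComponent i F)
              + f 1 * pderiv 1 (homogeneousComponent i F)).IsHomogeneous (i+1) := by
            have h2 : (2 + (i-1)) = i + 1 := by omega
            rw [← h2]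
            exact (hf0h.mul (pderiv_homog (homogeneousComponent_isHomogeneous i F) 0)).add
              (hf1h.mul (pderiv_homog (homogeneousComponent_isHomogeneous i F) 1))
          rw [homogeneousComponent_of_mem ((mem_homogeneousSubmodule _ _).mpr hhom)]
          rcases eq_or_ne i n with rfl | hne
          · rw [if_pos rfl, if_pos rfl]
          · rw [if_neg (by omega), if_neg hne]
      rw [Finset.sum_congr rfl hterm, Finset.sum_ite_eq' (Finset.range (F.totalDegree + 1)),
        if_pos (Finset.mem_range.mpr (by omega))] at hcomp
      exact hcomp.symm
  -- all positive components vanish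
  have hcompzero : ∀ n, 1 ≤ n → homogeneousComponent n F = 0 := by
    intro n hn
    have hG : (homogeneousComponent n F).IsHomogeneous n :=
      homogeneousComponent_isHomogeneous n F
    have hPDEn := hcompPDE n
    rw [hf0, hf1] at hPDEn
    by_cases h0 : c₁ 0 ≠ 0
    · exact key a₁ b₁ d₂ a₂ b₂ d₁ (c₁ 0) (c₁ 1) (c₂ 0) (c₂ 1) ρ₁ h0 hb1 hb2 hb1' hb2'
        hdet hρval hρ n hn _ hG hPDEn
    · push_neg at h0
      have h1 : c₁ 1 ≠ 0 := fun h => hc1nz ⟨h0, h⟩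
      set G' := rename (⇑(Equiv.swap (0:Fin 2) 1)) (homogeneousComponent n F) with hG'def
      have hswinj : Function.Injective (⇑(Equiv.swap (0:Fin 2) 1)) := Equiv.injective _
      have hG'h : G'.IsHomogeneous n := hG.rename_isHomogeneous
      have hsw0 : pderiv 0 G' = rename (⇑(Equiv.swap (0:Fin 2) 1)) (pderiv 1 (homogeneousComponent n F)) := by
        rw [hG'def, ← pderiv_rename hswinj 1]
        norm_num
      have hsw1 : pderiv 1 G' = rename (⇑(Equiv.swap (0:Fin 2) 1)) (pderiv 0 (homogeneousComponent n F)) := by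
        rw [hG'def, ← pderiv_rename hswinj 0]
        norm_num
      have hswPDE : (C a₂ * X 0^2 + C b₂ * X 0 * X 1 + C d₁ * X 1^2) * pderiv 0 G'
          + (C a₁ * X 1^2 + C b₁ * X 0 * X 1 + C d₂ * X 0^2) * pderiv 1 G' = 0 := by
        have h := congrArg (rename (⇑(Equiv.swap (0:Fin 2) 1))) hPDEn
        rw [map_add, map_mul, map_mul, map_zero] at h
        rw [hsw0, hsw1]
        simp only [map_add, map_mul, map_pow, rename_X, rename_C, Equiv.swap_apply_left,
          Equiv.swap_apply_right] at h ⊢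
        linear_combination h
      have hG'0 : G' = 0 := by
        apply key a₂ b₂ d₁ a₁ b₁ d₂ (c₁ 1) (c₁ 0) (c₂ 1) (c₂ 0) ρ₁ h1
          (by linear_combination hb2) (by linear_combination hb1)
          (by linear_combination hb2') (by linear_combination hb1')
          (by intro h; exact hdet (by linear_combination -h))
          (by linear_combination hρval) hρ n hn _ hG'h hswPDE
      have : rename (⇑(Equiv.swap (0:Fin 2) 1)) (homogeneousComponent n F)
          = rename (⇑(Equiv.swap (0:Fin 2) 1)) 0 := by
        rw [map_zero, ← hG'def, hG'0]
      exact rename_injective _ hswinj this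
  refine ⟨coeff 0 F, ?_⟩
  conv_lhs => rw [← sum_homogeneousComponent F]
  rw [Finset.sum_eq_single 0 (fun i _ hi => hcompzero i (by omega))
    (fun h => absurd (Finset.mem_range.mpr (by omega)) h)]
  exact homogeneousComponent_zero F
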